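/- Let G be an amply regular graph with girth 4, i.e., parameters (n, d, 0, β) with β ≥ 2 and G containing no triangles. Then for every edge xy ∈ E, the Lin-Lu-Yau curvature satisfies κ(x,y) = 2/d. -/

import Mathlib

open Filter Topology
open scoped Classical

variable {V : Type*}

/-- The L¹-Wasserstein (optimal transport) distance between two probability
measures on the vertex set of a graph, with respect to the graph distance. -/
noncomputable def wassDist (G : SimpleGraph V) (μ ν : V → ℝ) : ℝ :=
  sInf {c : ℝ | ∃ π : V → V → ℝ, (∀ u v, 0 ≤ π u v) ∧
    (∀ u, ∑ᶠ v, π u v = μ u) ∧ (∀ v, ∑ᶠ u, π u v = ν v) ∧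
    c = ∑ᶠ u, ∑ᶠ v, (G.dist u v : ℝ) * π u v}

/-- The probability measure `μ_x^p` with idleness `p` around vertex `x`. -/
noncomputable def muIdle (G : SimpleGraph V) [G.LocallyFinite] (p : ℝ) (x : V) : V → ℝ :=
  fun v => if v = x then p else if G.Adj x v then (1 - p) / (G.degree x : ℝ) else 0

/-- The `p`-Ollivier-Ricci curvature `κ_p(x,y)`. -/
noncomputable def ollivier (G : SimpleGraph V) [G.LocallyFinite] (p : ℝ) (x y : V) : ℝ :=
  1 - wassDist G (muIdle G p x) (muIdle G p y) / (G.dist x y : ℝ)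

/-- The Lin-Lu-Yau curvature `κ(x,y) = lim_{p→1} κ_p(x,y)/(1-p)`. -/
noncomputable def lly (G : SimpleGraph V) [G.LocallyFinite] (x y : V) : ℝ :=
  limUnder (𝓝[<] (1 : ℝ)) (fun p => ollivier G p x y / (1 - p))

/-- An amply regular graph with parameters `(n, d, a, b)`. -/
def IsAmplyRegular (G : SimpleGraph V) [Fintype V] [DecidableEq V] [DecidableRel G.Adj]
    (n d a b : ℕ) : Prop :=
  Fintype.card V = n ∧ G.IsRegularOfDegree d ∧
  (∀ x y : V, G.Adj x y → (G.neighborFinset x ∩ G.neighborFinset y).card = a) ∧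
  (∀ x y : V, G.dist x y = 2 → (G.neighborFinset x ∩ G.neighborFinset y).card = b)

/-- For an amply regular graph of girth 4 (parameters `(n, d, 0, β)`, `β ≥ 2`,
no triangles), every edge has Lin-Lu-Yau curvature exactly `2/d`. -/

lemma wass_le [Fintype V] (G : SimpleGraph V) (μ ν : V → ℝ) (π : V → V → ℝ)
    (hpos : ∀ u v, 0 ≤ π u v)
    (hrow : ∀ u, ∑ v, π u v = μ u) (hcol : ∀ v, ∑ u, π u v = ν v) :
    wassDist G μ ν ≤ ∑ u, ∑ v, (G.dist u v : ℝ) * π u v := by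
  apply csInf_le
  · refine ⟨0, ?_⟩
    rintro c ⟨π', hpos', -, -, rfl⟩
    simp only [finsum_eq_sum_of_fintype]
    refine Finset.sum_nonneg fun u _ => Finset.sum_nonneg fun v _ => ?_
    exact mul_nonneg (Nat.cast_nonneg _) (hpos' u v)
  · exact ⟨π, hpos, fun u => by rw [finsum_eq_sum_of_fintype]; exact hrow u,
      fun v => by rw [finsum_eq_sum_of_fintype]; exact hcol v,
      by simp only [finsum_eq_sum_of_fintype]⟩

lemma wass_ge [Fintype V] (G : SimpleGraph V) (μ ν : V → ℝ) (f : V → ℝ)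
    (hf : ∀ u v, f u - f v ≤ (G.dist u v : ℝ))
    (hne : ∃ π : V → V → ℝ, (∀ u v, 0 ≤ π u v) ∧ (∀ u, ∑ᶠ v, π u v = μ u) ∧
      (∀ v, ∑ᶠ u, π u v = ν v)) :
    (∑ u, f u * μ u) - (∑ u, f u * ν u) ≤ wassDist G μ ν := by
  apply le_csInf
  · obtain ⟨π, h1, h2, h3⟩ := hne
    exact ⟨_, π, h1, h2, h3, rfl⟩
  rintro c ⟨π, hpos, hrow, hcol, rfl⟩
  simp only [finsum_eq_sum_of_fintype] at hrow hcol ⊢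
  calc (∑ u, f u * μ u) - (∑ u, f u * ν u)
      = (∑ u, ∑ v, f u * π u v) - (∑ v, ∑ u, f v * π u v) := by
        congr 1
        · exact Finset.sum_congr rfl fun u _ => by rw [← hrow u, Finset.mul_sum]
        · exact Finset.sum_congr rfl fun v _ => by rw [← hcol v, Finset.mul_sum]
    _ = ∑ u, ∑ v, (f u - f v) * π u v := by
        rw [Finset.sum_comm (s := Finset.univ) (t := Finset.univ)
          (f := fun v u => f v * π u v), ← Finset.sum_sub_distrib]
        refine Finset.sum_congr rfl fun u _ => ?_
        rw [← Finset.sum_sub_distrib]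
        exact Finset.sum_congr rfl fun v _ => (sub_mul _ _ _).symm
    _ ≤ ∑ u, ∑ v, (G.dist u v : ℝ) * π u v :=
        Finset.sum_le_sum fun u _ => Finset.sum_le_sum fun v _ =>
          mul_le_mul_of_nonneg_right (hf u v) (hpos u v)

lemma sum_image_ite [DecidableEq V] (S : Finset V) (F : V → V)
    (hInj : ∀ u ∈ S, ∀ v ∈ S, F u = F v → u = v) (q : ℝ) (v : V) :
    ∑ u ∈ S, (if F u = v then q else 0) = if v ∈ S.image F then q else 0 :=
  ((Finset.sum_image (f := fun z => if z = v then q else 0)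
    (fun a ha b hb' hab => hInj a ha b hb' hab)).symm).trans (Finset.sum_ite_eq' _ v _)

set_option maxHeartbeats 1000000 in
lemma wass_eq [Fintype V] [DecidableEq V] (G : SimpleGraph V) [DecidableRel G.Adj]
    (hconn : G.Connected) (d β : ℕ) (hreg : G.IsRegularOfDegree d)
    (hb : ∀ x y : V, G.dist x y = 2 → (G.neighborFinset x ∩ G.neighborFinset y).card = β)
    (hβ : 2 ≤ β) (htri : ∀ u v w : V, G.Adj u v → G.Adj v w → ¬G.Adj u w)
    (x y : V) (hxy : G.Adj x y) (p : ℝ) (hp0 : 1/((d:ℝ)+1) ≤ p) (hp1 : p ≤ 1) :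
    wassDist G (muIdle G p x) (muIdle G p y) = 1 - 2*(1-p)/(d:ℝ) := by
  have hyNx : y ∈ G.neighborFinset x := (G.mem_neighborFinset x y).mpr hxy
  have hxNy : x ∈ G.neighborFinset y := (G.mem_neighborFinset y x).mpr hxy.symm
  have hd : 0 < d := by
    have := hreg x
    rw [← G.card_neighborFinset_eq_degree] at this
    rw [← this]
    exact Finset.card_pos.mpr ⟨y, hyNx⟩
  have hdR : (0:ℝ) < d := by exact_mod_cast hd
  set q : ℝ := (1 - p)/d with hq
  have hq0 : 0 ≤ q := div_nonneg (by linarith) hdR.le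
  have hpq : q ≤ p := by
    rw [hq, div_le_iff₀ hdR]
    rw [div_le_iff₀ (by linarith : (0:ℝ) < (d:ℝ)+1)] at hp0
    nlinarith
  have hp0' : 0 ≤ p := le_trans hq0 hpq
  have hxny : x ≠ y := hxy.ne
  set A : Finset V := (G.neighborFinset x).erase y with hA
  set B : Finset V := (G.neighborFinset y).erase x with hB
  have hNx : G.neighborFinset x = insert y A := (Finset.insert_erase hyNx).symm
  have hNy : G.neighborFinset y = insert x B := (Finset.insert_erase hxNy).symm
  have hAcard : A.card = d - 1 := by
    rw [hA, Finset.card_erase_of_mem hyNx, G.card_neighborFinset_eq_degree, hreg x]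
  have hBcard : B.card = d - 1 := by
    rw [hB, Finset.card_erase_of_mem hxNy, G.card_neighborFinset_eq_degree, hreg y]
  have hAadj : ∀ a ∈ A, G.Adj x a := fun a ha =>
    (G.mem_neighborFinset x a).mp (Finset.mem_of_mem_erase ha)
  have hBadj : ∀ b ∈ B, G.Adj y b := fun b hb' =>
    (G.mem_neighborFinset y b).mp (Finset.mem_of_mem_erase hb')
  have dist2 : ∀ u v w : V, G.Adj u v → G.Adj v w → u ≠ w → G.dist u w = 2 := by
    intro u v w huv hvw hne
    have hle : G.dist u w ≤ 2 := by
      have := G.dist_le (SimpleGraph.Walk.cons huv (SimpleGraph.Walk.cons hvw SimpleGraph.Walk.nil))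
      simpa using this
    have h0 : G.dist u w ≠ 0 := by
      rw [SimpleGraph.dist_ne_zero_iff_ne_and_reachable]
      exact ⟨hne, hconn.preconnected u w⟩
    have h1 : G.dist u w ≠ 1 := by
      rw [Ne, SimpleGraph.dist_eq_one_iff_adj]
      exact htri u v w huv hvw
    omega
  have hdA : ∀ a ∈ A, G.dist a y = 2 := fun a ha =>
    dist2 a x y (hAadj a ha).symm hxy (Finset.ne_of_mem_erase ha)
  have hdB : ∀ b ∈ B, G.dist x b = 2 := fun b hb' =>
    dist2 x y b hxy (hBadj b hb') (fun h => Finset.ne_of_mem_erase hb' h.symm)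
  have hNbA : ∀ a ∈ A, (G.neighborFinset a ∩ B).card = β - 1 := by
    intro a ha
    have he : G.neighborFinset a ∩ B = (G.neighborFinset a ∩ G.neighborFinset y).erase x := by
      ext v
      simp only [Finset.mem_inter, hB, Finset.mem_erase]
      tauto
    rw [he, Finset.card_erase_of_mem, hb a y (hdA a ha)]
    exact Finset.mem_inter.mpr ⟨(G.mem_neighborFinset a x).mpr (hAadj a ha).symm, hxNy⟩
  have hNbB : ∀ b ∈ B, (G.neighborFinset b ∩ A).card = β - 1 := by
    intro b hb'
    have he : G.neighborFinset b ∩ A = (G.neighborFinset x ∩ G.neighborFinset b).erase y := by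
      ext v
      simp only [Finset.mem_inter, hA, Finset.mem_erase]
      tauto
    rw [he, Finset.card_erase_of_mem, hb x b (hdB b hb')]
    exact Finset.mem_inter.mpr ⟨hyNx, (G.mem_neighborFinset b y).mpr (hBadj b hb').symm⟩
  -- Hall's condition and matching
  have hall : ∀ s : Finset {a // a ∈ A},
      s.card ≤ (s.biUnion (fun a => G.neighborFinset a.1 ∩ B)).card := by
    intro s
    set t : {a // a ∈ A} → Finset V := fun a => G.neighborFinset a.1 ∩ B with ht
    set T := s.biUnion t with hT
    have e1 : ∀ a ∈ s, (t a).card = ∑ b ∈ T, if b ∈ t a then 1 else 0 := by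
      intro a ha
      rw [← Finset.card_filter]
      congr 1
      rw [Finset.filter_mem_eq_inter]
      exact (Finset.inter_eq_right.mpr (Finset.subset_biUnion_of_mem t ha)).symm
    have e2 : ∑ a ∈ s, (t a).card = ∑ b ∈ T, (s.filter (fun a => b ∈ t a)).card := by
      rw [Finset.sum_congr rfl e1, Finset.sum_comm]
      exact Finset.sum_congr rfl fun b _ => (Finset.card_filter _ _).symm
    have e3 : ∀ b ∈ T, (s.filter (fun a => b ∈ t a)).card ≤ β - 1 := by
      intro b hbT
      obtain ⟨a0, -, ha0⟩ := Finset.mem_biUnion.mp hbT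
      have hbB : b ∈ B := (Finset.mem_inter.mp ha0).2
      calc (s.filter (fun a => b ∈ t a)).card
          = ((s.filter (fun a => b ∈ t a)).image Subtype.val).card :=
            (Finset.card_image_of_injective _ Subtype.val_injective).symm
        _ ≤ (G.neighborFinset b ∩ A).card := by
            apply Finset.card_le_card
            intro v hv
            obtain ⟨a, ha, rfl⟩ := Finset.mem_image.mp hv
            have := (Finset.mem_filter.mp ha).2
            have hadj := (G.mem_neighborFinset _ _).mp (Finset.mem_inter.mp this).1
            exact Finset.mem_inter.mpr ⟨(G.mem_neighborFinset b a.1).mpr hadj.symm, a.2⟩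
        _ = β - 1 := hNbB b hbB
    have e4 : (β - 1) * s.card ≤ (β - 1) * T.card := by
      calc (β - 1) * s.card = ∑ a ∈ s, (t a).card := by
            rw [Finset.sum_congr rfl fun (a : {a // a ∈ A}) (_ : a ∈ s) => hNbA a.1 a.2,
              Finset.sum_const, smul_eq_mul, mul_comm]
        _ = ∑ b ∈ T, (s.filter (fun a => b ∈ t a)).card := e2
        _ ≤ ∑ _b ∈ T, (β - 1) := Finset.sum_le_sum e3
        _ = (β - 1) * T.card := by rw [Finset.sum_const, smul_eq_mul, mul_comm]
    exact Nat.le_of_mul_le_mul_left e4 (by omega)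
  obtain ⟨f, hfinj, hft⟩ :=
    (Finset.all_card_le_biUnion_card_iff_existsInjective'
      (fun a : {a // a ∈ A} => G.neighborFinset a.1 ∩ B)).mp hall
  have hxA : x ∉ A := fun h => G.loopless.irrefl x (hAadj x h)
  have hyA : y ∉ A := Finset.notMem_erase y _
  have hxB : x ∉ B := Finset.notMem_erase x _
  have hyB : y ∉ B := fun h => G.loopless.irrefl y (hBadj y h)
  set F : V → V := fun u => if h : u ∈ A then f ⟨u, h⟩ else u with hF
  have hFx : F x = x := dif_neg hxA
  have hFy : F y = y := dif_neg hyA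
  have hFA : ∀ a (h : a ∈ A), F a = f ⟨a, h⟩ := fun a h => dif_pos h
  have hFaB : ∀ a ∈ A, F a ∈ B := by
    intro a h
    rw [hFA a h]
    exact (Finset.mem_inter.mp (hft ⟨a, h⟩)).2
  have hFadj : ∀ a ∈ A, G.Adj a (F a) := by
    intro a h
    rw [hFA a h]
    exact (G.mem_neighborFinset _ _).mp (Finset.mem_inter.mp (hft ⟨a, h⟩)).1
  set S : Finset V := insert x (insert y A) with hS
  have hmemS : ∀ u, u ∈ S ↔ u = x ∨ u = y ∨ u ∈ A := by
    intro u; simp [hS]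
  have hInjA : ∀ a ∈ A, ∀ b ∈ A, F a = F b → a = b := by
    intro a ha b hb' hab
    rw [hFA a ha, hFA b hb'] at hab
    exact Subtype.mk_eq_mk.mp (hfinj hab)
  have hInj : ∀ u ∈ S, ∀ v ∈ S, F u = F v → u = v := by
    intro u hu v hv huv
    rw [hmemS] at hu hv
    rcases hu with rfl | rfl | hu <;> rcases hv with rfl | rfl | hv
    · rfl
    · rw [hFx, hFy] at huv; exact absurd huv hxny
    · rw [hFx] at huv; exact absurd (huv ▸ hFaB v hv) hxB
    · rw [hFx, hFy] at huv; exact absurd huv.symm hxny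
    · rfl
    · rw [hFy] at huv; exact absurd (huv ▸ hFaB v hv) hyB
    · rw [hFx] at huv; exact absurd (huv ▸ hFaB u hu) hxB
    · rw [hFy] at huv; exact absurd (huv ▸ hFaB u hu) hyB
    · exact hInjA u hu v hv huv
  have hAimg : A.image F = B := by
    apply Finset.eq_of_subset_of_card_le
    · intro v hv
      obtain ⟨a, ha, rfl⟩ := Finset.mem_image.mp hv
      exact hFaB a ha
    · rw [Finset.card_image_of_injOn (fun a ha b hb' => hInjA a ha b hb'), hAcard, hBcard]
  have hSimg : S.image F = insert x (insert y B) := by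
    rw [hS, Finset.image_insert, Finset.image_insert, hFx, hFy, hAimg]
  have hmu : ∀ z u, muIdle G p z u = if u = z then p else if G.Adj z u then q else 0 := by
    intro z u
    simp only [muIdle, hreg z, hq]
  set w : V → ℝ := fun u => if u = x then q else muIdle G p x u with hw
  have hwS : ∀ u ∈ S, w u = q := by
    intro u hu
    rw [hmemS] at hu
    rcases hu with rfl | rfl | hu
    · exact if_pos rfl
    · simp [hw, hmu, Ne.symm hxny, hxy]
    · have hux : u ≠ x := fun h => hxA (h ▸ hu)
      simp [hw, hmu, hux, hAadj u hu]
  have hw0 : ∀ u ∉ S, w u = 0 := by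
    intro u hu
    rw [hmemS] at hu
    push_neg at hu
    obtain ⟨h1, h2, h3⟩ := hu
    have hnadj : ¬ G.Adj x u := by
      intro hadj
      have hm : u ∈ G.neighborFinset x := (G.mem_neighborFinset x u).mpr hadj
      rw [hNx, Finset.mem_insert] at hm
      rcases hm with rfl | hm
      · exact h2 rfl
      · exact h3 hm
    simp [hw, hmu, h1, hnadj]
  have hw_nonneg : ∀ u, 0 ≤ w u := by
    intro u
    by_cases hu : u ∈ S
    · rw [hwS u hu]; exact hq0
    · rw [hw0 u hu]
  set π : V → V → ℝ := fun u v =>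
    (if v = F u then w u else 0) + (if u = x ∧ v = y then p - q else 0) with hπ
  have hpos : ∀ u v, 0 ≤ π u v := by
    intro u v
    apply add_nonneg
    · split_ifs
      · exact hw_nonneg u
      · exact le_rfl
    · split_ifs
      · linarith
      · exact le_rfl
  have hrow : ∀ u, ∑ v, π u v = muIdle G p x u := by
    intro u
    simp only [hπ]
    rw [Finset.sum_add_distrib]
    have h2 : ∑ v, (if u = x ∧ v = y then p - q else 0) = if u = x then p - q else 0 := by
      by_cases hu : u = x
      · subst hu; simp
      · simp [hu]
    rw [Finset.sum_ite_eq' Finset.univ (F u) (fun _ => w u), h2]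
    simp only [Finset.mem_univ, if_true]
    by_cases hu : u = x
    · rw [if_pos hu, hwS u (by rw [hmemS]; left; exact hu), hmu, if_pos hu]
      ring
    · rw [if_neg hu, add_zero, hw]
      exact if_neg hu
  have hcol : ∀ v, ∑ u, π u v = muIdle G p y v := by
    intro v
    simp only [hπ]
    rw [Finset.sum_add_distrib]
    have h1 : ∑ u, (if v = F u then w u else 0) = if v ∈ S.image F then q else 0 := by
      rw [← Finset.sum_subset (Finset.subset_univ S)
        (fun u _ hu => by rw [hw0 u hu, ite_self])]
      calc ∑ u ∈ S, (if v = F u then w u else 0)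
          = ∑ u ∈ S, (if F u = v then q else 0) :=
            Finset.sum_congr rfl fun u hu => by rw [hwS u hu]; exact if_congr eq_comm rfl rfl
        _ = if v ∈ S.image F then q else 0 := sum_image_ite S F hInj q v
    have h2 : ∑ u, (if u = x ∧ v = y then p - q else 0) = if v = y then p - q else 0 := by
      by_cases hv : v = y
      · subst hv; simp
      · simp [hv]
    rw [h1, h2, hSimg, hmu]
    by_cases hv : v = y
    · subst hv
      rw [if_pos (by simp), if_pos rfl, if_pos rfl]
      ring
    · rw [if_neg hv, if_neg hv, add_zero]
      by_cases hv2 : v ∈ insert x (insert y B)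
      · rw [if_pos hv2]
        have hadj : G.Adj y v := by
          rcases Finset.mem_insert.mp hv2 with rfl | hv3
          · exact hxy.symm
          rcases Finset.mem_insert.mp hv3 with rfl | hv4
          · exact absurd rfl hv
          · exact hBadj v hv4
        rw [if_pos hadj]
      · rw [if_neg hv2]
        have hnadj : ¬ G.Adj y v := by
          intro hadj
          have hm : v ∈ G.neighborFinset y := (G.mem_neighborFinset _ _).mpr hadj
          rw [hNy] at hm
          exact hv2 (Finset.insert_subset_insert _ (Finset.subset_insert y B) hm)
        rw [if_neg hnadj]
  have hdxy : G.dist x y = 1 := SimpleGraph.dist_eq_one_iff_adj.mpr hxy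
  have hAcardR : (A.card : ℝ) = (d:ℝ) - 1 := by
    rw [hAcard, Nat.cast_sub (by omega : 1 ≤ d), Nat.cast_one]
  have hcost : ∑ u, ∑ v, (G.dist u v : ℝ) * π u v = ((d:ℝ) - 1) * q + (p - q) := by
    have inner : ∀ u, ∑ v, (G.dist u v : ℝ) * π u v
        = (G.dist u (F u) : ℝ) * w u + (if u = x then (G.dist x y : ℝ) * (p - q) else 0) := by
      intro u
      simp only [hπ, mul_add]
      rw [Finset.sum_add_distrib]
      congr 1
      · simp only [mul_ite, mul_zero]
        rw [Finset.sum_ite_eq' Finset.univ (F u) (fun v => (G.dist u v : ℝ) * w u)]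
        simp
      · by_cases hu : u = x
        · simp only [hu, true_and, mul_ite, mul_zero, if_pos rfl]
          rw [Finset.sum_ite_eq' Finset.univ y (fun v => (G.dist x v : ℝ) * (p - q))]
          simp
        · simp [hu]
    rw [Finset.sum_congr rfl fun u _ => inner u, Finset.sum_add_distrib]
    have t2 : ∑ u, (if u = x then (G.dist x y : ℝ) * (p - q) else 0) = p - q := by
      rw [Finset.sum_ite_eq' Finset.univ x (fun _ => (G.dist x y : ℝ) * (p - q))]
      simp [hdxy]
    have t1 : ∑ u, (G.dist u (F u) : ℝ) * w u = ((d:ℝ) - 1) * q := by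
      rw [← Finset.sum_subset (Finset.subset_univ S)
        (fun u _ hu => by rw [hw0 u hu, mul_zero])]
      rw [hS, Finset.sum_insert (by simp [hxA, hxny]), Finset.sum_insert hyA]
      rw [hFx, hFy, SimpleGraph.dist_self, SimpleGraph.dist_self]
      have : ∀ a ∈ A, (G.dist a (F a) : ℝ) * w a = q := by
        intro a ha
        rw [SimpleGraph.dist_eq_one_iff_adj.mpr (hFadj a ha),
          hwS a (by rw [hmemS]; right; right; exact ha)]
        simp
      rw [Finset.sum_congr rfl this, Finset.sum_const, Nat.cast_zero, zero_mul, zero_mul,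
        zero_add, zero_add, nsmul_eq_mul, hAcardR]
    rw [t1, t2]

  have hBcardR : (B.card : ℝ) = (d:ℝ) - 1 := by
    rw [hBcard, Nat.cast_sub (by omega : 1 ≤ d), Nat.cast_one]
  have hmusplit : ∀ z u, muIdle G p z u
      = (if u = z then p else 0) + (if u ∈ G.neighborFinset z then q else 0) := by
    intro z u
    rw [hmu]
    by_cases h1 : u = z
    · simp [h1]
    · simp only [if_neg h1, zero_add, G.mem_neighborFinset]
  have hSx : ∑ u, (G.dist u y : ℝ) * muIdle G p x u = p + ((d:ℝ) - 1) * (2 * q) := by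
    rw [Finset.sum_congr rfl fun u _ => by rw [hmusplit x u, mul_add]]
    rw [Finset.sum_add_distrib]
    have t1 : ∑ u, (G.dist u y:ℝ) * (if u = x then p else 0) = p := by
      simp only [mul_ite, mul_zero]
      rw [Finset.sum_ite_eq' Finset.univ x (fun u => (G.dist u y:ℝ) * p)]
      simp [hdxy]
    have t2 : ∑ u, (G.dist u y:ℝ) * (if u ∈ G.neighborFinset x then q else 0)
        = ((d:ℝ)-1) * (2*q) := by
      simp only [mul_ite, mul_zero]
      rw [Finset.sum_ite_mem, Finset.univ_inter, hNx, Finset.sum_insert hyA,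
        SimpleGraph.dist_self]
      have hc : ∀ a ∈ A, (G.dist a y:ℝ) * q = 2 * q := by
        intro a ha
        rw [hdA a ha]
        norm_num
      rw [Finset.sum_congr rfl hc, Finset.sum_const, nsmul_eq_mul, hAcardR]
      push_cast
      ring
    rw [t1, t2]
  have hSy : ∑ u, (G.dist u y : ℝ) * muIdle G p y u = q + ((d:ℝ)-1) * q := by
    rw [Finset.sum_congr rfl fun u _ => by rw [hmusplit y u, mul_add]]
    rw [Finset.sum_add_distrib]
    have t1 : ∑ u, (G.dist u y:ℝ) * (if u = y then p else 0) = 0 := by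
      simp only [mul_ite, mul_zero]
      rw [Finset.sum_ite_eq' Finset.univ y (fun u => (G.dist u y:ℝ) * p)]
      simp
    have t2 : ∑ u, (G.dist u y:ℝ) * (if u ∈ G.neighborFinset y then q else 0)
        = q + ((d:ℝ)-1) * q := by
      simp only [mul_ite, mul_zero]
      rw [Finset.sum_ite_mem, Finset.univ_inter, hNy, Finset.sum_insert hxB, hdxy]
      have hc : ∀ b ∈ B, (G.dist b y:ℝ) * q = q := by
        intro b hb'
        rw [SimpleGraph.dist_eq_one_iff_adj.mpr (hBadj b hb').symm]
        norm_num
      rw [Finset.sum_congr rfl hc, Finset.sum_const, nsmul_eq_mul, hBcardR]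
      norm_num
    rw [t1, t2, zero_add]
  have hupper := wass_le G (muIdle G p x) (muIdle G p y) π hpos hrow hcol
  rw [hcost] at hupper
  have hfl : ∀ u v : V, (G.dist u y : ℝ) - (G.dist v y : ℝ) ≤ (G.dist u v : ℝ) := by
    intro u v
    have htr := hconn.dist_triangle (u := u) (v := v) (w := y)
    rw [sub_le_iff_le_add]
    exact_mod_cast htr
  have hlower := wass_ge G (muIdle G p x) (muIdle G p y) (fun v => (G.dist v y : ℝ)) hfl
    ⟨π, hpos, fun u => by rw [finsum_eq_sum_of_fintype]; exact hrow u,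
      fun v => by rw [finsum_eq_sum_of_fintype]; exact hcol v⟩
  simp only [hSx, hSy] at hlower
  have hWval : wassDist G (muIdle G p x) (muIdle G p y) = ((d:ℝ)-1) * q + (p - q) := by
    refine le_antisymm hupper ?_
    have h' : ((d:ℝ)-1) * q + (p - q) = (p + ((d:ℝ)-1)*(2*q)) - (q + ((d:ℝ)-1)*q) := by ring
    rw [h']
    exact hlower
  rw [hWval, hq]
  field_simp
  ring

theorem stmt16 [Fintype V] [DecidableEq V] (G : SimpleGraph V) [DecidableRel G.Adj]
    (hconn : G.Connected) (n d β : ℕ) (h : IsAmplyRegular G n d 0 β) (hβ : 2 ≤ β)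
    (htri : ∀ u v w : V, G.Adj u v → G.Adj v w → ¬G.Adj u w)
    (x y : V) (hxy : G.Adj x y) :
    lly G x y = 2 / (d : ℝ) := by
  obtain ⟨hcard, hreg, ha, hb⟩ := h
  have hyNx : y ∈ G.neighborFinset x := (G.mem_neighborFinset x y).mpr hxy
  have hd : 0 < d := by
    have hdeg := hreg x
    rw [← G.card_neighborFinset_eq_degree] at hdeg
    rw [← hdeg]
    exact Finset.card_pos.mpr ⟨y, hyNx⟩
  have hdR : (0:ℝ) < d := by exact_mod_cast hd
  have hlt : 1/((d:ℝ)+1) < 1 := by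
    rw [div_lt_one (by linarith)]
    linarith
  have hdxy : G.dist x y = 1 := SimpleGraph.dist_eq_one_iff_adj.mpr hxy
  have key : ∀ p ∈ Set.Ioo (1/((d:ℝ)+1)) 1, ollivier G p x y / (1 - p) = 2 / (d:ℝ) := by
    intro p hp
    have hW := wass_eq G hconn d β hreg hb hβ htri x y hxy p hp.1.le hp.2.le
    rw [ollivier, hW, hdxy, Nat.cast_one, div_one]
    have h1p : 1 - p ≠ 0 := by
      have := hp.2
      intro hcon
      rw [Set.mem_Ioo] at hp
      linarith [hp.2]
    field_simp
    ring
  rw [lly]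
  apply Filter.Tendsto.limUnder_eq
  have hev : (fun _ => (2:ℝ)/(d:ℝ)) =ᶠ[𝓝[<] (1:ℝ)] (fun p => ollivier G p x y / (1-p)) := by
    filter_upwards [Ioo_mem_nhdsLT_of_mem (Set.mem_Ioc.mpr ⟨hlt, le_refl (1:ℝ)⟩)] with p hp
    exact (key p hp).symm
  exact Filter.Tendsto.congr' hev tendsto_const_nhds
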